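/- Let k ≥ 1 be an integer, let d and δ̄ be real numbers with 1 ≤ d ≤ δ̄, let b_1, …, b_k be real numbers with b_u ≥ d for each u = 1, …, k, and let x be a real number with 0 ≤ x ≤ 1. Then x + Σ_{u=1}^{k} (b_u − d·x) / max(b_u − d + 1, δ̄) ≤ 2k. -/

import Mathlib

open Finset

/-- The key arithmetic inequality in the proof of the 2k-approximation guarantee for
k-HDM: for `1 ≤ d ≤ δ̄`, capacities `b u ≥ d` and `0 ≤ x ≤ 1`,
`x + Σ_u (b_u − d·x) / max (b_u − d + 1) δ̄ ≤ 2k`. -/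
theorem kHDM_key_inequality
    (k : ℕ) (hk : 1 ≤ k)
    (d δ : ℝ) (hd : 1 ≤ d) (hdδ : d ≤ δ)
    (b : Fin k → ℝ) (hb : ∀ u, d ≤ b u)
    (x : ℝ) (hx0 : 0 ≤ x) (hx1 : x ≤ 1) :
    x + ∑ u : Fin k, (b u - d * x) / max (b u - d + 1) δ ≤ 2 * k := by
  have hterm : ∀ u : Fin k, (b u - d * x) / max (b u - d + 1) δ ≤ 2 - x := by
    intro u
    set M := max (b u - d + 1) δ with hM
    have h1 : b u - d + 1 ≤ M := le_max_left _ _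
    have h2 : δ ≤ M := le_max_right _ _
    have hMpos : 0 < M := lt_of_lt_of_le (by linarith) h2
    rw [div_le_iff₀ hMpos]
    have hbu := hb u
    nlinarith [mul_nonneg hx0 (sub_nonneg.2 h1), mul_nonneg (sub_nonneg.2 hx1) (sub_nonneg.2 hdδ)]
  calc x + ∑ u : Fin k, (b u - d * x) / max (b u - d + 1) δ
      ≤ x + ∑ u : Fin k, (2 - x) := by
        gcongr with u _ 
        exact hterm u
    _ = x + k * (2 - x) := by simp [Finset.sum_const, mul_comm]; ring
    _ ≤ 2 * k := by
        have : (1 : ℝ) ≤ k := by exact_mod_cast hk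
        nlinarith
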